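/- Let K be a number field, let d_K = [K:ℚ] be its degree, and let D_K be the absolute value of the discriminant of K over ℚ. Then the class number of K satisfies |Pic(O_K)| ≤ (d_K + D_K)^{d_K}. -/

import Mathlib

open NumberField

open UniqueFactorizationMonoid Module NumberField.InfinitePlace in
private theorem aux_fac (s : ℕ) : ∀ d : ℕ, 2 * s ≤ d → (4:ℝ)^s * d.factorial ≤ 3^s * d^d := by
  induction s with
  | zero =>
    intro d _
    simpa using (by exact_mod_cast Nat.factorial_le_pow d : (d.factorial : ℝ) ≤ (d:ℝ)^d)
  | succ s ih =>
    intro d hd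
    have hd2 : 2 ≤ d := le_trans (by omega) hd
    rcases Nat.lt_or_ge d 3 with h3 | h3
    · have : d = 2 := by omega
      subst this
      have : s = 0 := by omega
      subst this
      norm_num [Nat.factorial]
    · obtain ⟨e, rfl⟩ : ∃ e, d = e + 2 := ⟨d - 2, by omega⟩
      have he : 1 ≤ e := by omega
      have ihe := ih e (by omega)
      have he0 : (0:ℝ) < e := by exact_mod_cast he
      have hkey : 3 * (e:ℝ)^e ≤ ((e:ℝ)+2)^e := by
        have hb : (1:ℝ) + e * (2/e) ≤ (1 + 2/e)^e :=
          one_add_mul_le_pow (le_trans (by norm_num) (by positivity : (0:ℝ) ≤ 2/(e:ℝ))) e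
        have h2 : (e:ℝ) * (2/e) = 2 := by field_simp
        rw [h2] at hb
        calc 3 * (e:ℝ)^e = ((1:ℝ) + 2) * (e:ℝ)^e := by norm_num
          _ ≤ (1 + 2/e)^e * (e:ℝ)^e := mul_le_mul_of_nonneg_right hb (by positivity)
          _ = ((e:ℝ)+2)^e := by rw [← mul_pow]; congr 1; field_simp
      have hfac : ((e+2).factorial : ℝ) = ((e:ℝ)+2) * ((e:ℝ)+1) * e.factorial := by
        push_cast [Nat.factorial_succ]
        ring
      have hXe : ((e:ℝ))^e ≤ ((e:ℝ)+2)^e / 3 := by linarith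
      have hfpos : (0:ℝ) ≤ e.factorial := by positivity
      calc (4:ℝ)^(s+1) * (e+2).factorial
          = 4*((e:ℝ)+2)*((e:ℝ)+1) * ((4:ℝ)^s * e.factorial) := by rw [hfac]; ring
        _ ≤ 4*((e:ℝ)+2)*((e:ℝ)+2) * ((3:ℝ)^s * (e:ℝ)^e) := by
            have h1 : 4*((e:ℝ)+2)*((e:ℝ)+1) ≤ 4*((e:ℝ)+2)*((e:ℝ)+2) := by nlinarith
            have h2 : (0:ℝ) ≤ (4:ℝ)^s * e.factorial := by positivity
            have h3' : (0:ℝ) ≤ 4*((e:ℝ)+2)*((e:ℝ)+2) := by positivity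
            calc 4*((e:ℝ)+2)*((e:ℝ)+1) * ((4:ℝ)^s * e.factorial)
                ≤ 4*((e:ℝ)+2)*((e:ℝ)+2) * ((4:ℝ)^s * e.factorial) :=
                  mul_le_mul_of_nonneg_right h1 h2
              _ ≤ 4*((e:ℝ)+2)*((e:ℝ)+2) * ((3:ℝ)^s * (e:ℝ)^e) :=
                  mul_le_mul_of_nonneg_left ihe h3'
        _ = (4*((e:ℝ)+2)^2*(3:ℝ)^s) * (e:ℝ)^e := by ring
        _ ≤ (4*((e:ℝ)+2)^2*(3:ℝ)^s) * (((e:ℝ)+2)^e / 3) :=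
            mul_le_mul_of_nonneg_left hXe (by positivity)
        _ = (4/3) * ((3:ℝ)^s * ((e:ℝ)+2)^(e+2)) := by ring
        _ ≤ 3 * ((3:ℝ)^s * ((e:ℝ)+2)^(e+2)) :=
            mul_le_mul_of_nonneg_right (by norm_num) (by positivity)
        _ = 3^(s+1) * (((e+2:ℕ)):ℝ)^(e+2) := by push_cast; ring

private theorem aux_one_add_pow (D d : ℕ) (hd : 1 ≤ d) : 1 + D ^ d ≤ (1 + D) ^ d := by
  induction d with
  | zero => omega
  | succ d ih =>
    rcases Nat.eq_zero_or_pos d with rfl | hd'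
    · simp
    · have := ih hd'
      calc 1 + D ^ (d+1) ≤ (1 + D ^ d) * (1 + D) := by
            have hps : D ^ (d+1) = D ^ d * D := pow_succ D d
            nlinarith [Nat.zero_le (D ^ d), Nat.zero_le D]
        _ ≤ (1 + D) ^ d * (1 + D) := Nat.mul_le_mul_right _ this
        _ = (1 + D) ^ (d+1) := by ring

open UniqueFactorizationMonoid in
private theorem aux_two_pow_le_absNorm (K : Type*) [Field K] [NumberField K]
    (J : Ideal (𝓞 K)) (hJ : J ≠ 0) :
    2 ^ Multiset.card (normalizedFactors J) ≤ Ideal.absNorm J := by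
  have h1 : Ideal.absNorm J = ((normalizedFactors J).map Ideal.absNorm).prod := by
    conv_lhs => rw [← associated_iff_eq.mp (prod_normalizedFactors hJ)]
    rw [← Multiset.prod_hom]
  rw [h1]
  calc 2 ^ Multiset.card (normalizedFactors J)
      = 2 ^ Multiset.card ((normalizedFactors J).map Ideal.absNorm) := by rw [Multiset.card_map]
    _ ≤ _ := Multiset.pow_card_le_prod ?_
  intro x hx
  obtain ⟨P, hP, rfl⟩ := Multiset.mem_map.mp hx
  have hprime : Prime P := prime_of_normalized_factor P hP
  rcases Nat.lt_or_ge (Ideal.absNorm P) 2 with h | h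
  · interval_cases h' : Ideal.absNorm P
    · exact absurd (Ideal.absNorm_eq_zero_iff.mp h') hprime.1
    · exact absurd (Ideal.isUnit_iff.mpr (Ideal.absNorm_eq_one_iff.mp h')) hprime.2.1
  · exact h

open UniqueFactorizationMonoid Module NumberField.InfinitePlace in
/-- Lenstra's bound: the class number of a number field `K` is at most
`(d_K + D_K)^(d_K)`, where `d_K = [K:ℚ]` and `D_K` is the absolute value of the
discriminant of `K` over `ℚ`. -/
theorem classNumber_le_degree_add_discr_pow (K : Type*) [Field K] [NumberField K] :
    Nat.card (ClassGroup (𝓞 K)) ≤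
      (Module.finrank ℚ K + (discr K).natAbs) ^ Module.finrank ℚ K := by
  classical
  set d := Module.finrank ℚ K with hd
  set D := (discr K).natAbs with hD
  have hd1 : 1 ≤ d := Module.finrank_pos
  have hD1 : 1 ≤ D := Nat.one_le_iff_ne_zero.mpr (Int.natAbs_ne_zero.mpr (discr_ne_zero K))
  set M := Nat.sqrt D with hM
  -- Step 1: choose ideals
  choose I hImk hInorm using fun C : ClassGroup (𝓞 K) => exists_ideal_in_class_of_norm_le C
  -- the Minkowski factor is at most 1
  have hs : 2 * nrComplexPlaces K ≤ d := by
    have := card_add_two_mul_card_eq_rank K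
    omega
  have hdpow : (0:ℝ) < (d:ℝ)^d := by positivity
  have hfactor : (4 / Real.pi) ^ nrComplexPlaces K * ((d.factorial : ℝ) / (d:ℝ)^d) ≤ 1 := by
    have hpi : (3:ℝ) ≤ Real.pi := Real.pi_gt_three.le
    have h43 : (4:ℝ) / Real.pi ≤ 4 / 3 := by
      apply div_le_div_of_nonneg_left (by norm_num) (by norm_num) hpi
    have h1 : (4 / Real.pi) ^ nrComplexPlaces K ≤ (4/3) ^ nrComplexPlaces K := by
      apply pow_le_pow_left₀ (by positivity) h43
    have h2 := aux_fac (nrComplexPlaces K) d hs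
    have hpipow : (3:ℝ) ^ nrComplexPlaces K ≤ Real.pi ^ nrComplexPlaces K :=
      pow_le_pow_left₀ (by norm_num) hpi _
    have key : (4:ℝ)^nrComplexPlaces K * d.factorial ≤ Real.pi ^ nrComplexPlaces K * (d:ℝ)^d :=
      le_trans h2 (mul_le_mul_of_nonneg_right hpipow (by positivity))
    rw [div_pow, div_mul_div_comm, div_le_one (by positivity)]
    exact key
  -- norm bound: absNorm (I C) ≤ M
  have hnormM : ∀ C, Ideal.absNorm (I C : Ideal (𝓞 K)) ≤ M := by
    intro C
    have h0 : (0:ℝ) ≤ Real.sqrt |(discr K : ℝ)| := Real.sqrt_nonneg _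
    have hB : ((Ideal.absNorm (I C : Ideal (𝓞 K)) : ℝ)) ≤ Real.sqrt |(discr K : ℝ)| := by
      refine le_trans (hInorm C) ?_
      calc (4 / Real.pi) ^ nrComplexPlaces K *
            ((d.factorial : ℝ) / (d:ℝ)^d * Real.sqrt |(discr K : ℝ)|)
          = ((4 / Real.pi) ^ nrComplexPlaces K * ((d.factorial : ℝ) / (d:ℝ)^d)) *
            Real.sqrt |(discr K : ℝ)| := by ring
        _ ≤ 1 * Real.sqrt |(discr K : ℝ)| := mul_le_mul_of_nonneg_right hfactor h0
        _ = Real.sqrt |(discr K : ℝ)| := one_mul _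
    have habs : |(discr K : ℝ)| = (D : ℝ) := by
      rw [hD, Nat.cast_natAbs, Int.cast_abs]
    rw [habs] at hB
    rw [hM, Nat.le_sqrt]
    have hsq : ((Ideal.absNorm (I C : Ideal (𝓞 K)) : ℝ)) ^ 2 ≤ (D:ℝ) := by
      calc ((Ideal.absNorm (I C : Ideal (𝓞 K)) : ℝ)) ^ 2
          ≤ (Real.sqrt (D:ℝ)) ^ 2 := by
            apply pow_le_pow_left₀ (by positivity) hB
        _ = (D:ℝ) := Real.sq_sqrt (by positivity)
    exact_mod_cast (by push_cast at hsq ⊢; nlinarith [hsq] :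
      ((Ideal.absNorm (I C : Ideal (𝓞 K)) * Ideal.absNorm (I C : Ideal (𝓞 K)) : ℕ) : ℝ) ≤ (D:ℝ))
  -- the span ideals
  have hIne : ∀ C, (I C : Ideal (𝓞 K)) ≠ 0 := fun C =>
    mem_nonZeroDivisors_iff_ne_zero.mp (I C).2
  -- injection into the sigma type
  let T := Σ i : Fin (M + 1),
    {t : Multiset (Ideal (𝓞 K)) //
      t ∈ (normalizedFactors (Ideal.span {((i : ℕ) : 𝓞 K)})).powerset.toFinset}
  have hmem : ∀ C, normalizedFactors (I C : Ideal (𝓞 K)) ∈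
      (normalizedFactors (Ideal.span
        {((Ideal.absNorm (I C : Ideal (𝓞 K)) : ℕ) : 𝓞 K)})).powerset.toFinset := by
    intro C
    rw [Multiset.mem_toFinset, Multiset.mem_powerset]
    have hsplt : Ideal.span {((Ideal.absNorm (I C : Ideal (𝓞 K)) : ℕ) : 𝓞 K)} ≤
        (I C : Ideal (𝓞 K)) := by
      rw [Ideal.span_singleton_le_iff_mem]
      exact_mod_cast Ideal.absNorm_mem (I C : Ideal (𝓞 K))
    have hspan_ne : Ideal.span {((Ideal.absNorm (I C : Ideal (𝓞 K)) : ℕ) : 𝓞 K)} ≠ 0 := by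
      rw [Ne, Ideal.zero_eq_bot, Ideal.span_singleton_eq_bot]
      have := Ideal.absNorm_ne_zero_of_nonZeroDivisors (I C)
      exact_mod_cast Nat.cast_ne_zero.mpr this
    exact (dvd_iff_normalizedFactors_le_normalizedFactors (hIne C) hspan_ne).mp
      (Ideal.dvd_iff_le.mpr hsplt)
  let f : ClassGroup (𝓞 K) → T := fun C =>
    ⟨⟨Ideal.absNorm (I C : Ideal (𝓞 K)), Nat.lt_succ_of_le (hnormM C)⟩,
     ⟨normalizedFactors (I C : Ideal (𝓞 K)), hmem C⟩⟩
  have hfinj : Function.Injective f := by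
    intro C C' h
    have h1 : Ideal.absNorm (I C : Ideal (𝓞 K)) = Ideal.absNorm (I C' : Ideal (𝓞 K)) := by
      have := congrArg (fun x : T => (x.1 : ℕ)) h
      simpa [f] using this
    have h2 : normalizedFactors (I C : Ideal (𝓞 K)) = normalizedFactors (I C' : Ideal (𝓞 K)) := by
      have := congrArg (fun x : T => (x.2 : Multiset (Ideal (𝓞 K)))) h
      simpa [f] using this
    have hII : (I C : Ideal (𝓞 K)) = (I C' : Ideal (𝓞 K)) := by
      have e1 := associated_iff_eq.mp (prod_normalizedFactors (hIne C))
      have e2 := associated_iff_eq.mp (prod_normalizedFactors (hIne C'))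
      rw [← e1, ← e2, h2]
    have : I C = I C' := Subtype.ext hII
    rw [← hImk C, ← hImk C', this]
  have hcard : Nat.card (ClassGroup (𝓞 K)) ≤ Nat.card T :=
    Nat.card_le_card_of_injective f hfinj
  -- count T
  have hcardT : Nat.card T ≤ 1 + M * M ^ d := by
    rw [Nat.card_eq_fintype_card, Fintype.card_sigma]
    have hfiber : ∀ i : Fin (M+1),
        Fintype.card {t : Multiset (Ideal (𝓞 K)) //
          t ∈ (normalizedFactors (Ideal.span {((i : ℕ) : 𝓞 K)})).powerset.toFinset}
        = (normalizedFactors (Ideal.span {((i : ℕ) : 𝓞 K)})).powerset.toFinset.card := by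
      intro i
      exact Fintype.card_coe _
    calc ∑ i : Fin (M+1), Fintype.card {t : Multiset (Ideal (𝓞 K)) //
          t ∈ (normalizedFactors (Ideal.span {((i : ℕ) : 𝓞 K)})).powerset.toFinset}
        = ∑ i : Fin (M+1),
          (normalizedFactors (Ideal.span {((i : ℕ) : 𝓞 K)})).powerset.toFinset.card := by
          exact Finset.sum_congr rfl fun i _ => hfiber i
      _ ≤ 1 + M * M ^ d := by
          rw [Fin.sum_univ_succ]
          have h0 : ((normalizedFactors (Ideal.span {(((0 : Fin (M+1)) : ℕ) : 𝓞 K)})).powerset).toFinset.card ≤ 1 := by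
            have hzero : Ideal.span {(0 : 𝓞 K)} = (0 : Ideal (𝓞 K)) := by
              rw [Ideal.zero_eq_bot, Ideal.span_singleton_eq_bot]
            have h00 : normalizedFactors (⊥ : Ideal (𝓞 K)) = 0 := by
              rw [← Ideal.zero_eq_bot, normalizedFactors_zero]
            simp [hzero, h00]
          have hstep : ∀ i : Fin M, (normalizedFactors (Ideal.span
              {(((i.succ : Fin (M+1)) : ℕ) : 𝓞 K)})).powerset.toFinset.card ≤ M ^ d := by
            intro i
            set m : ℕ := (i : ℕ) + 1 with hm
            have hmpos : 1 ≤ m := by omega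
            have hmM : m ≤ M := by
              have := i.2
              omega
            have hspan_ne : Ideal.span {(m : 𝓞 K)} ≠ (0 : Ideal (𝓞 K)) := by
              rw [Ne, Ideal.zero_eq_bot, Ideal.span_singleton_eq_bot]
              exact Nat.cast_ne_zero.mpr (by omega)
            have hnorm_span : Ideal.absNorm (Ideal.span {(m : 𝓞 K)}) = m ^ d := by
              rw [Ideal.absNorm_span_singleton,
                show ((m : 𝓞 K)) = algebraMap ℤ (𝓞 K) (m : ℤ) by simp,
                Algebra.norm_algebraMap_of_basis (RingOfIntegers.basis K) (m : ℤ),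
                ← Module.finrank_eq_card_basis (RingOfIntegers.basis K),
                NumberField.RingOfIntegers.rank, Int.natAbs_pow]
              simp [hd]
            have h2pow := aux_two_pow_le_absNorm K (Ideal.span {(m : 𝓞 K)}) hspan_ne
            have hc : (normalizedFactors (Ideal.span {(m : 𝓞 K)})).powerset.toFinset.card
                ≤ m ^ d := by
              calc (normalizedFactors (Ideal.span {(m : 𝓞 K)})).powerset.toFinset.card
                  ≤ Multiset.card (normalizedFactors (Ideal.span {(m : 𝓞 K)})).powerset :=
                    Multiset.toFinset_card_le _
                _ = 2 ^ Multiset.card (normalizedFactors (Ideal.span {(m : 𝓞 K)})) :=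
                    Multiset.card_powerset _
                _ ≤ Ideal.absNorm (Ideal.span {(m : 𝓞 K)}) := h2pow
                _ = m ^ d := hnorm_span
            have : ((i.succ : Fin (M+1)) : ℕ) = m := by simp [hm]
            rw [this]
            exact le_trans hc (Nat.pow_le_pow_left hmM d)
          calc ((normalizedFactors (Ideal.span {(((0 : Fin (M+1)) : ℕ) : 𝓞 K)})).powerset).toFinset.card +
              ∑ i : Fin M, (normalizedFactors (Ideal.span
                {(((i.succ : Fin (M+1)) : ℕ) : 𝓞 K)})).powerset.toFinset.card
              ≤ 1 + ∑ i : Fin M, M ^ d := by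
                apply Nat.add_le_add h0
                exact Finset.sum_le_sum fun i _ => hstep i
            _ = 1 + M * M ^ d := by simp [Finset.sum_const, mul_comm]
  -- final arithmetic
  have hMD : M * M ≤ D := Nat.sqrt_le D
  have hfinal : 1 + M * M ^ d ≤ (d + D) ^ d := by
    have hMpow : M * M ^ d ≤ D ^ d := by
      calc M * M ^ d = M ^ (d + 1) := by ring
        _ ≤ M ^ (2 * d) := by
          rcases Nat.eq_zero_or_pos M with hM0 | hMpos
          · rw [hM0, zero_pow (by omega : d + 1 ≠ 0), zero_pow (by omega : 2 * d ≠ 0)]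
          · exact Nat.pow_le_pow_right hMpos (by omega)
        _ = (M * M) ^ d := by rw [two_mul, pow_add, ← mul_pow]
        _ ≤ D ^ d := Nat.pow_le_pow_left hMD d
    calc 1 + M * M ^ d ≤ 1 + D ^ d := by omega
      _ ≤ (1 + D) ^ d := aux_one_add_pow D d hd1
      _ ≤ (d + D) ^ d := Nat.pow_le_pow_left (by omega) d
  exact le_trans hcard (le_trans hcardT hfinal)
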